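/- Let Φ be a real quadratic form on ℂ^n (viewed as ℝ^{2n}), x₀ ∈ ℂ^n, x₀* ∈ ℂ^n. Then the condition x₀*·x + x₀·(2/i)(∂Φ/∂x)(x) ∈ ℝ for all x ∈ ℂ^n is equivalent to the condition −Φ(x) + Φ(x+x₀) + Re(i x₀*·(x + x₀/2)) = 0 for all x ∈ ℂ^n. -/

import Mathlib

open Complex

variable {n : ℕ}

-- fderiv lemma
lemma fderiv_quad (B : (Fin n → ℂ) →ₗ[ℝ] (Fin n → ℂ) →ₗ[ℝ] ℝ) (x v : Fin n → ℂ) :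
    fderiv ℝ (fun y => B y y) x v = B x v + B v x := by
  classical

  let B' : (Fin n → ℂ) →ₗ[ℝ] ((Fin n → ℂ) →L[ℝ] ℝ) :=
    (LinearMap.toContinuousLinearMap :
      ((Fin n → ℂ) →ₗ[ℝ] ℝ) ≃ₗ[ℝ] ((Fin n → ℂ) →L[ℝ] ℝ)).toLinearMap.comp B
  let Bc : (Fin n → ℂ) →L[ℝ] (Fin n → ℂ) →L[ℝ] ℝ := LinearMap.toContinuousLinearMap B'
  have hBc : ∀ a b : Fin n → ℂ, Bc a b = B a b := fun a b => rfl
  have h := Bc.hasFDerivAt_of_bilinear (hasFDerivAt_id x) (hasFDerivAt_id x)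
  have hΦ : HasFDerivAt (fun y => B y y)
      (Bc.precompR (Fin n → ℂ) (id x) (ContinuousLinearMap.id ℝ (Fin n → ℂ))
        + Bc.precompL (Fin n → ℂ) (ContinuousLinearMap.id ℝ (Fin n → ℂ)) (id x)) x := by
    exact h
  rw [hΦ.fderiv]
  simp [ContinuousLinearMap.precompR, ContinuousLinearMap.precompL, hBc]

lemma B_decomp (B : (Fin n → ℂ) →ₗ[ℝ] (Fin n → ℂ) →ₗ[ℝ] ℝ) (x v : Fin n → ℂ) :
    B x v = ∑ j, ((v j).re * B x (Pi.single j 1) + (v j).im * B x (Pi.single j Complex.I)) := by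
  classical
  have hv : v = ∑ j, ((v j).re • (Pi.single j (1:ℂ) : Fin n → ℂ) + (v j).im • (Pi.single j Complex.I : Fin n → ℂ)) := by
    funext k
    rw [Finset.sum_apply]
    simp only [Pi.add_apply, Pi.smul_apply, Pi.single_apply, smul_ite, smul_zero,
      Complex.real_smul]
    simp only [ite_add_ite, add_zero, Finset.sum_ite_eq, Finset.mem_univ, if_true,
      mul_one]
    exact (Complex.re_add_im (v k)).symm
  conv_lhs => rw [hv]
  simp [map_sum, map_add, map_smul, smul_eq_mul]



/-- The holomorphic partial derivative `∂Φ/∂x_j = (1/2)(∂/∂Re x_j − i ∂/∂Im x_j)Φ`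
of a real-valued function `Φ` on `ℂⁿ`. -/
noncomputable def holDeriv (n : ℕ) (Φ : (Fin n → ℂ) → ℝ) (x : Fin n → ℂ)
    (j : Fin n) : ℂ :=
  (2⁻¹ : ℂ) *
    (((fderiv ℝ Φ x (Pi.single j 1) : ℝ) : ℂ) -
      Complex.I * ((fderiv ℝ Φ x (Pi.single j Complex.I) : ℝ) : ℂ))

lemma holDeriv_eq (Φ : (Fin n → ℂ) → ℝ)
    (B : (Fin n → ℂ) →ₗ[ℝ] (Fin n → ℂ) →ₗ[ℝ] ℝ)
    (hBsymm : ∀ x y, B x y = B y x) (hΦ : ∀ x, Φ x = B x x) (x : Fin n → ℂ) (j : Fin n) :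
    holDeriv n Φ x j =
      ((B x (Pi.single j 1) : ℝ) : ℂ) - Complex.I * ((B x (Pi.single j Complex.I) : ℝ) : ℂ) := by
  have hfe : Φ = fun y => B y y := funext hΦ
  rw [holDeriv, hfe, fderiv_quad, fderiv_quad, hBsymm (Pi.single j 1) x,
    hBsymm (Pi.single j Complex.I) x]
  push_cast
  ring

lemma aux_real {α : Type*} (L : α → ℝ) (x₀ : α) :
    (∀ x, L x = 0) ↔ (∀ x, -(L x) - (1/2) * L x₀ = 0) := by
  constructor
  · intro h x; rw [h x, h x₀]; ring
  · intro h
    have h0 : L x₀ = 0 := by have := h x₀; linarith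
    intro x; have := h x; rw [h0] at this; linarith

/-- For a real quadratic form `Φ` on `ℂⁿ` and `x₀, x₀* ∈ ℂⁿ`, the condition
`x₀*·x + x₀·(2/i)(∂Φ/∂x)(x) ∈ ℝ` for all `x` is equivalent to
`−Φ(x) + Φ(x+x₀) + Re(i x₀*·(x + x₀/2)) = 0` for all `x`. -/
theorem stmt18 (n : ℕ) (Φ : (Fin n → ℂ) → ℝ)
    (B : (Fin n → ℂ) →ₗ[ℝ] (Fin n → ℂ) →ₗ[ℝ] ℝ)
    (hBsymm : ∀ x y, B x y = B y x) (hΦ : ∀ x, Φ x = B x x)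
    (x₀ xs₀ : Fin n → ℂ) :
    (∀ x : Fin n → ℂ,
        (∑ j, xs₀ j * x j +
            ∑ j, x₀ j * ((2 / Complex.I) * holDeriv n Φ x j)).im = 0) ↔
      (∀ x : Fin n → ℂ,
        -Φ x + Φ (x + x₀) + (Complex.I * ∑ j, xs₀ j * (x j + x₀ j / 2)).re = 0) := by
  classical
  have hL : ∀ x : Fin n → ℂ, (∑ j, xs₀ j * x j +
      ∑ j, x₀ j * ((2 / Complex.I) * holDeriv n Φ x j)).im =
      (∑ j, xs₀ j * x j).im - 2 * B x x₀ := by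
    intro x
    rw [Complex.add_im, Complex.im_sum, Complex.im_sum]
    have hterm : ∀ j, (x₀ j * ((2 / Complex.I) * holDeriv n Φ x j)).im =
        -2 * ((x₀ j).re * B x (Pi.single j 1) + (x₀ j).im * B x (Pi.single j Complex.I)) := by
      intro j
      rw [holDeriv_eq Φ B hBsymm hΦ, div_I]
      simp [Complex.mul_im, Complex.mul_re]
      ring
    rw [Finset.sum_congr rfl (fun j _ => hterm j), ← Finset.mul_sum, ← B_decomp B x x₀]
    ring
  have hR : ∀ x : Fin n → ℂ,
      -Φ x + Φ (x + x₀) + (Complex.I * ∑ j, xs₀ j * (x j + x₀ j / 2)).re =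
      -((∑ j, xs₀ j * x j).im - 2 * B x x₀)
        - (1/2) * ((∑ j, xs₀ j * x₀ j).im - 2 * B x₀ x₀) := by
    intro x
    have hT : (∑ j, xs₀ j * (x j + x₀ j / 2)) =
        (∑ j, xs₀ j * x j) + (∑ j, xs₀ j * x₀ j) / 2 := by
      rw [Finset.sum_div, ← Finset.sum_add_distrib]
      exact Finset.sum_congr rfl (fun j _ => by ring)
    rw [hΦ, hΦ, hT]
    simp only [map_add, LinearMap.add_apply, Complex.I_mul_re, Complex.add_im]
    rw [hBsymm x₀ x]
    have h2 : ((∑ j, xs₀ j * x₀ j) / 2).im = (∑ j, xs₀ j * x₀ j).im / 2 := by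
      simp [Complex.div_im]
    rw [h2]
    ring
  exact (forall_congr' fun x => by rw [hL x]).trans
    ((aux_real (fun x => (∑ j, xs₀ j * x j).im - 2 * B x x₀) x₀).trans
      (forall_congr' fun x => by rw [hR x]))
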